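/- If B is an invertible matrix jointly diagonalizing two SPD matrices C₁ and C₂, i.e., B C₁ Bᵀ = D₁ and B C₂ Bᵀ = D₂ with D₁, D₂ diagonal, and A = B^{-1}, then the geometric mean is C₁ # C₂ = A (D₁ D₂)^{1/2} Aᵀ. -/

import Mathlib

open Matrix

/-- Spectral function of a real matrix: applies `f` to the eigenvalues when the
matrix is symmetric (Hermitian); junk value (the matrix itself) otherwise. -/
noncomputable def mfun {N : ℕ} (f : ℝ → ℝ) (A : Matrix (Fin N) (Fin N) ℝ) :
    Matrix (Fin N) (Fin N) ℝ :=
  if h : A.IsHermitian then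
    (h.eigenvectorUnitary : Matrix (Fin N) (Fin N) ℝ) *
      Matrix.diagonal (fun i => f (h.eigenvalues i)) *
      (star h.eigenvectorUnitary : Matrix (Fin N) (Fin N) ℝ)
  else A

/-- The (unique SPD) square root of an SPD matrix, defined spectrally. -/
noncomputable def sqrtm {N : ℕ} (A : Matrix (Fin N) (Fin N) ℝ) := mfun Real.sqrt A

/-- The logarithm of an SPD matrix, defined spectrally. -/
noncomputable def logm {N : ℕ} (A : Matrix (Fin N) (Fin N) ℝ) := mfun Real.log A

/-- The exponential of a symmetric matrix, defined spectrally. -/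
noncomputable def expm {N : ℕ} (A : Matrix (Fin N) (Fin N) ℝ) := mfun Real.exp A

/-- Real power of an SPD matrix, defined spectrally. -/
noncomputable def powm {N : ℕ} (A : Matrix (Fin N) (Fin N) ℝ) (b : ℝ) :=
  mfun (fun x => x ^ b) A

/-- The geometric mean `C₁ # C₂ = C₁^{1/2} (C₁^{-1/2} C₂ C₁^{-1/2})^{1/2} C₁^{1/2}`. -/
noncomputable def geomMean {N : ℕ} (C₁ C₂ : Matrix (Fin N) (Fin N) ℝ) :=
  sqrtm C₁ * sqrtm ((sqrtm C₁)⁻¹ * C₂ * (sqrtm C₁)⁻¹) * sqrtm C₁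

/-- Frobenius norm of a real matrix. -/
noncomputable def frobNorm {N : ℕ} (A : Matrix (Fin N) (Fin N) ℝ) : ℝ :=
  Real.sqrt (∑ i, ∑ j, (A i j) ^ 2)

/-- The Fisher information Riemannian distance
`δ_R(C₁, C₂) = ‖ln (C₁^{-1/2} C₂ C₁^{-1/2})‖_F`. -/
noncomputable def distR {N : ℕ} (C₁ C₂ : Matrix (Fin N) (Fin N) ℝ) : ℝ :=
  frobNorm (logm ((sqrtm C₁)⁻¹ * C₂ * (sqrtm C₁)⁻¹))

/-- The geodesic `γ_β(Ω → Φ) = Ω^{1/2} (Ω^{-1/2} Φ Ω^{-1/2})^β Ω^{1/2}`. -/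
noncomputable def geodesic {N : ℕ} (Ω Φ : Matrix (Fin N) (Fin N) ℝ) (b : ℝ) :=
  sqrtm Ω * powm ((sqrtm Ω)⁻¹ * Φ * (sqrtm Ω)⁻¹) b * sqrtm Ω


open scoped MatrixOrder in
/-- Square root of a PSD real matrix, defined spectrally. -/
noncomputable def Matrix.PosSemidef.sqrt {N : ℕ} {M : Matrix (Fin N) (Fin N) ℝ}
    (hM : M.PosSemidef) : Matrix (Fin N) (Fin N) ℝ :=
  (hM.1.eigenvectorUnitary : Matrix (Fin N) (Fin N) ℝ) *
    Matrix.diagonal (fun i => Real.sqrt (hM.1.eigenvalues i)) *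
    (star hM.1.eigenvectorUnitary : Matrix (Fin N) (Fin N) ℝ)

open scoped MatrixOrder in
private lemma psd_sqrt_eq_cfc {N : ℕ} {M : Matrix (Fin N) (Fin N) ℝ} (hM : M.PosSemidef) :
    hM.sqrt = CFC.sqrt M := by
  rw [CFC.sqrt_eq_cfc, cfc_nnreal_eq_real _ M hM.nonneg, hM.1.cfc_eq, IsHermitian.cfc,
    Matrix.PosSemidef.sqrt]
  simp only [Unitary.conjStarAlgAut_apply, Function.comp_def]
  congr 3
  funext i
  simp [Real.coe_sqrt, Real.coe_toNNReal', max_eq_left (hM.eigenvalues_nonneg i)]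

open scoped MatrixOrder in
lemma Matrix.PosSemidef.posSemidef_sqrt {N : ℕ} {M : Matrix (Fin N) (Fin N) ℝ}
    (hM : M.PosSemidef) : hM.sqrt.PosSemidef := by
  rw [psd_sqrt_eq_cfc hM]; exact (CFC.sqrt_nonneg M).posSemidef

open scoped MatrixOrder in
lemma Matrix.PosSemidef.sqrt_mul_self {N : ℕ} {M : Matrix (Fin N) (Fin N) ℝ}
    (hM : M.PosSemidef) : hM.sqrt * hM.sqrt = M := by
  rw [psd_sqrt_eq_cfc hM]; exact CFC.sqrt_mul_sqrt_self M hM.nonneg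

open scoped MatrixOrder in
lemma Matrix.PosSemidef.eq_sqrt_of_sq_eq {N : ℕ} {Y M : Matrix (Fin N) (Fin N) ℝ}
    (hY : Y.PosSemidef) (hM : M.PosSemidef) (h : Y ^ 2 = M) : Y = hM.sqrt := by
  rw [psd_sqrt_eq_cfc hM]
  exact ((CFC.sqrt_eq_iff M Y hM.nonneg hY.nonneg).mpr (by rw [← h, sq])).symm

private lemma sqrtm_eq_sqrt {N : ℕ} {M : Matrix (Fin N) (Fin N) ℝ} (hM : M.PosSemidef) :
    sqrtm M = hM.sqrt := by
  rw [sqrtm, mfun, dif_pos hM.1]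
  rfl

private lemma diag_pos_of_congr {N : ℕ} {C B : Matrix (Fin N) (Fin N) ℝ} {d : Fin N → ℝ}
    (hC : C.PosDef) (hB : IsUnit B) (hD : B * C * Bᵀ = Matrix.diagonal d) : ∀ i, 0 < d i := by
  have hdBT : IsUnit Bᵀ.det := by
    rw [Matrix.det_transpose]; exact (isUnit_iff_isUnit_det B).mp hB
  have hP : (Matrix.diagonal d).PosDef := by
    rw [← hD]
    refine posDef_iff_dotProduct_mulVec.mpr ⟨?_, fun x hx => ?_⟩
    · rw [hD]; exact isHermitian_diagonal _
    · have hxB : Bᵀ *ᵥ x ≠ 0 := by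
        intro hc
        apply hx
        have h2 := congrArg (fun v => (Bᵀ)⁻¹ *ᵥ v) hc
        simpa [Matrix.mulVec_mulVec, Matrix.nonsing_inv_mul _ hdBT] using h2
      have h3 := hC.dotProduct_mulVec_pos hxB
      rw [star_trivial] at h3 ⊢
      simpa [← Matrix.mulVec_mulVec, Matrix.dotProduct_mulVec, Matrix.mulVec_transpose] using h3
  exact posDef_diagonal_iff.mp hP

/-- if `B` jointly diagonalizes `C₁, C₂` (`B Cᵢ Bᵀ = Dᵢ` diagonal) and
`A = B⁻¹`, then `C₁ # C₂ = A (D₁ D₂)^{1/2} Aᵀ` with the entrywise diagonal square root. -/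
theorem stmt8 {N : ℕ} (C₁ C₂ B A : Matrix (Fin N) (Fin N) ℝ) (d₁ d₂ : Fin N → ℝ)
    (h₁ : C₁.PosDef) (h₂ : C₂.PosDef) (hB : IsUnit B) (hA : A = B⁻¹)
    (hD₁ : B * C₁ * Bᵀ = Matrix.diagonal d₁) (hD₂ : B * C₂ * Bᵀ = Matrix.diagonal d₂) :
    geomMean C₁ C₂ = A * Matrix.diagonal (fun i => Real.sqrt (d₁ i * d₂ i)) * Aᵀ := by
  have hdB : IsUnit B.det := (isUnit_iff_isUnit_det B).mp hB
  have hBA : B * A = 1 := by rw [hA]; exact Matrix.mul_nonsing_inv B hdB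
  have hAB : A * B = 1 := by rw [hA]; exact Matrix.nonsing_inv_mul B hdB
  have hTT : Bᵀ * Aᵀ = 1 := by rw [← Matrix.transpose_mul, hAB, Matrix.transpose_one]
  have hTT' : Aᵀ * Bᵀ = 1 := by rw [← Matrix.transpose_mul, hBA, Matrix.transpose_one]
  have hd₁ : ∀ i, 0 < d₁ i := diag_pos_of_congr h₁ hB hD₁
  have hd₂ : ∀ i, 0 < d₂ i := diag_pos_of_congr h₂ hB hD₂
  have hC₁ : C₁ = A * Matrix.diagonal d₁ * Aᵀ := by
    rw [← hD₁]
    calc C₁ = (A * B) * C₁ * (Bᵀ * Aᵀ) := by rw [hAB, hTT, Matrix.one_mul, Matrix.mul_one]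
    _ = A * (B * C₁ * Bᵀ) * Aᵀ := by noncomm_ring
  have hC₂ : C₂ = A * Matrix.diagonal d₂ * Aᵀ := by
    rw [← hD₂]
    calc C₂ = (A * B) * C₂ * (Bᵀ * Aᵀ) := by rw [hAB, hTT, Matrix.one_mul, Matrix.mul_one]
    _ = A * (B * C₂ * Bᵀ) * Aᵀ := by noncomm_ring
  have hPSD₁ := h₁.posSemidef
  set S := sqrtm C₁ with hSdef
  have hSeq : S = hPSD₁.sqrt := sqrtm_eq_sqrt hPSD₁
  have hSpsd : S.PosSemidef := hSeq ▸ hPSD₁.posSemidef_sqrt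
  have hSS : S * S = C₁ := by rw [hSeq]; exact hPSD₁.sqrt_mul_self
  have hSdet : IsUnit S.det := by
    have hmul : S.det * S.det = C₁.det := by rw [← Matrix.det_mul, hSS]
    have hC₁det : C₁.det ≠ 0 := h₁.det_pos.ne'
    have : S.det ≠ 0 := fun h => hC₁det (by rw [← hmul, h, mul_zero])
    exact this.isUnit
  have hSsymm : Sᵀ = S := by
    rw [← Matrix.conjTranspose_eq_transpose_of_trivial, hSpsd.1.eq]
  have hSinvT : (S⁻¹)ᵀ = S⁻¹ := by rw [Matrix.transpose_nonsing_inv, hSsymm]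
  have hSinvH : (S⁻¹)ᴴ = S⁻¹ := by
    rw [Matrix.conjTranspose_eq_transpose_of_trivial, hSinvT]
  set G := Matrix.diagonal (fun i => Real.sqrt (d₁ i * d₂ i)) with hGdef
  set X := A * G * Aᵀ with hXdef
  set Y := S⁻¹ * X * S⁻¹ with hYdef
  have hGpsd : G.PosSemidef := posSemidef_diagonal_iff.mpr fun i => Real.sqrt_nonneg _
  have hXpsd : X.PosSemidef := by
    have := hGpsd.mul_mul_conjTranspose_same A
    rwa [Matrix.conjTranspose_eq_transpose_of_trivial] at this
  have hYpsd : Y.PosSemidef := by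
    have := hXpsd.mul_mul_conjTranspose_same S⁻¹
    rwa [hSinvH] at this
  have hSinvSinv : S⁻¹ * S⁻¹ = C₁⁻¹ := by rw [← Matrix.mul_inv_rev, hSS]
  have hAinv : A⁻¹ = B := by rw [hA, Matrix.nonsing_inv_nonsing_inv B hdB]
  have hC₁inv : C₁⁻¹ = Bᵀ * (Matrix.diagonal d₁)⁻¹ * B := by
    rw [hC₁, Matrix.mul_inv_rev, Matrix.mul_inv_rev]
    rw [← Matrix.transpose_nonsing_inv, hAinv, Matrix.mul_assoc]
  have hDinv : (Matrix.diagonal d₁)⁻¹ = Matrix.diagonal (fun i => (d₁ i)⁻¹) :=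
    Matrix.inv_eq_right_inv (by
      rw [Matrix.diagonal_mul_diagonal,
        show (fun i => d₁ i * (d₁ i)⁻¹) = fun _ => (1 : ℝ) from
          funext fun i => mul_inv_cancel₀ (hd₁ i).ne',
        Matrix.diagonal_one])
  have hGDG : G * (Matrix.diagonal d₁)⁻¹ * G = Matrix.diagonal d₂ := by
    rw [hGdef, hDinv, Matrix.diagonal_mul_diagonal, Matrix.diagonal_mul_diagonal]
    have hfun : (fun i => Real.sqrt (d₁ i * d₂ i) * (d₁ i)⁻¹ * Real.sqrt (d₁ i * d₂ i)) = d₂ := by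
      funext i
      have h1 : d₁ i ≠ 0 := (hd₁ i).ne'
      have hs : Real.sqrt (d₁ i * d₂ i) * Real.sqrt (d₁ i * d₂ i) = d₁ i * d₂ i :=
        Real.mul_self_sqrt (mul_nonneg (hd₁ i).le (hd₂ i).le)
      field_simp
      linarith [hs]
    rw [hfun]
  have hXCX : X * C₁⁻¹ * X = C₂ := by
    rw [hC₁inv, hXdef, hC₂]
    calc A * G * Aᵀ * (Bᵀ * (Matrix.diagonal d₁)⁻¹ * B) * (A * G * Aᵀ)
        = A * G * (Aᵀ * Bᵀ) * (Matrix.diagonal d₁)⁻¹ * (B * A) * G * Aᵀ := by noncomm_ring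
    _ = A * (G * (Matrix.diagonal d₁)⁻¹ * G) * Aᵀ := by
        rw [hTT', hBA, Matrix.mul_one, Matrix.mul_one]; noncomm_ring
    _ = A * Matrix.diagonal d₂ * Aᵀ := by rw [hGDG]
  set M := S⁻¹ * C₂ * S⁻¹ with hMdef
  have hMpsd : M.PosSemidef := by
    have := h₂.posSemidef.mul_mul_conjTranspose_same S⁻¹
    rwa [hSinvH] at this
  have hYY : Y ^ 2 = M := by
    rw [pow_two, hYdef, hMdef, ← hXCX]
    calc S⁻¹ * X * S⁻¹ * (S⁻¹ * X * S⁻¹)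
        = S⁻¹ * X * (S⁻¹ * S⁻¹) * X * S⁻¹ := by noncomm_ring
    _ = S⁻¹ * (X * C₁⁻¹ * X) * S⁻¹ := by rw [hSinvSinv]; noncomm_ring
  have hYeq : Y = hMpsd.sqrt := hYpsd.eq_sqrt_of_sq_eq hMpsd hYY
  show S * sqrtm M * S = X
  rw [sqrtm_eq_sqrt hMpsd, ← hYeq, hYdef]
  calc S * (S⁻¹ * X * S⁻¹) * S = (S * S⁻¹) * X * (S⁻¹ * S) := by noncomm_ring
  _ = X := by
      rw [Matrix.mul_nonsing_inv S hSdet, Matrix.nonsing_inv_mul S hSdet,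
        Matrix.one_mul, Matrix.mul_one]
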